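/- Let R be a set of nonnegative reals with 0 ∈ R such that 0 is not a limit point of R. Then there exists an Urysohn metric space U with dist(U) = R if and only if R is countable and R satisfies the 4-values condition. -/

import Mathlib

/-- The set of distances realized in a metric space. -/
def distSet (X : Type*) [MetricSpace X] : Set ℝ :=
  {r : ℝ | ∃ x y : X, dist x y = r}

/-- A metric space is homogeneous if every isometry from a finite subset into the
space extends to a bijective self-isometry. -/
def IsHomogeneous (X : Type*) [MetricSpace X] : Prop :=
  ∀ F : Set X, F.Finite →
    ∀ f : F → X, (∀ x y : F, dist (f x) (f y) = dist (x : X) (y : X)) →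
      ∃ g : X ≃ᵢ X, ∀ x : F, g (x : X) = f x

/-- A metric space is universal if it is homogeneous and embeds isometrically every
finite metric space whose distances lie in its distance set. -/
def IsUniversal (X : Type*) [MetricSpace X] : Prop :=
  IsHomogeneous X ∧
    ∀ (F : Type) [MetricSpace F] [Finite F], distSet F ⊆ distSet X →
      ∃ f : F → X, ∀ a b : F, dist (f a) (f b) = dist a b

/-- An Urysohn metric space: homogeneous, separable, complete, and embedding every
separable metric space whose distances lie in its distance set. -/
def IsUrysohn (X : Type*) [MetricSpace X] : Prop :=
  IsHomogeneous X ∧ TopologicalSpace.SeparableSpace X ∧ CompleteSpace X ∧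
    ∀ (N : Type) [MetricSpace N] [TopologicalSpace.SeparableSpace N],
      distSet N ⊆ distSet X →
        ∃ f : N → X, ∀ a b : N, dist (f a) (f b) = dist a b

/-- The triple `(a, b, c)` of nonnegative reals is metric: `|a - b| ≤ c ≤ a + b`. -/
def MetricTriple (a b c : ℝ) : Prop := |a - b| ≤ c ∧ c ≤ a + b

/-- `x ⤳ (a, b, c, d)`: the triples `(x,a,b)` and `(x,c,d)` are metric and
`a ≥ max {b, c, d}`. -/
def Leads (x a b c d : ℝ) : Prop :=
  MetricTriple x a b ∧ MetricTriple x c d ∧ b ≤ a ∧ c ≤ a ∧ d ≤ a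

/-- The 4-values condition. -/
def FourValues (R : Set ℝ) : Prop :=
  ∀ a b c d, a ∈ R → b ∈ R → c ∈ R → d ∈ R →
    (∃ x ∈ R, Leads x a b c d) → ∃ y ∈ R, Leads y a d c b

/-- `0` is a limit point of `R ⊆ [0, ∞)`. -/
def ZeroLimit (R : Set ℝ) : Prop := ∀ ε > 0, ∃ r ∈ R, 0 < r ∧ r < ε

/-- `d` is a metric on the type `α`. -/
def IsMetricOn {α : Type*} (d : α → α → ℝ) : Prop :=
  (∀ x, d x x = 0) ∧ (∀ x y, d x y = d y x) ∧
    (∀ x y z, d x z ≤ d x y + d y z) ∧ ∀ x y, d x y = 0 → x = y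

/-- A restricted type function of the metric space `X`: a positive real valued function on a
finite subset of `X`, compatible with the metric, with values in the distance set of `X`. -/
def IsRestrictedType (X : Type*) [MetricSpace X] (F : Set X) (t : F → ℝ) : Prop :=
  F.Finite ∧ (∀ x, 0 < t x) ∧
    (∀ x y : F, |t x - t y| ≤ dist (x : X) (y : X) ∧ dist (x : X) (y : X) ≤ t x + t y) ∧
    ∀ x, t x ∈ distSet X

/-- A Katětov function of the metric space `X`: a positive real valued function on a finite
subset of `X` whose one-point extension `Sp(k)` is isometric to a subspace of `X`. -/
def IsKatetov (X : Type*) [MetricSpace X] (F : Set X) (k : F → ℝ) : Prop :=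
  F.Finite ∧ (∀ x, 0 < k x) ∧
    ∃ (g : F → X) (p : X),
      (∀ x y : F, dist (g x) (g y) = dist (x : X) (y : X)) ∧ ∀ x : F, dist p (g x) = k x

/-- `p` realizes the type function `t` in `X`. -/
def Realizes {X : Type*} [MetricSpace X] (F : Set X) (t : F → ℝ) (p : X) : Prop :=
  ∀ x : F, dist p (x : X) = t x

/-- Full triangle condition for three sides. -/
def Tri (a b c : ℝ) : Prop := a ≤ b + c ∧ b ≤ a + c ∧ c ≤ a + b

lemma metricTriple_iff_tri {a b c : ℝ} : MetricTriple a b c ↔ Tri a b c := by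
  unfold MetricTriple Tri
  rw [abs_sub_le_iff]
  constructor <;> intro h
  · exact ⟨by linarith [h.1.1, h.1.2, h.2], by linarith [h.1.1, h.1.2, h.2],
      by linarith [h.1.1, h.1.2, h.2]⟩
  · exact ⟨⟨by linarith [h.1, h.2.1, h.2.2], by linarith [h.1, h.2.1, h.2.2]⟩,
      by linarith [h.1, h.2.1, h.2.2]⟩

lemma tri_iff' {s a b : ℝ} : Tri s a b ↔ |a - b| ≤ s ∧ s ≤ a + b := by
  unfold Tri; rw [abs_sub_le_iff]
  constructor <;> intro h
  · exact ⟨⟨by linarith [h.1, h.2.1, h.2.2], by linarith [h.1, h.2.1, h.2.2]⟩,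
      by linarith [h.1, h.2.1, h.2.2]⟩
  · exact ⟨by linarith [h.1.1, h.1.2, h.2], by linarith [h.1.1, h.1.2, h.2],
      by linarith [h.1.1, h.1.2, h.2]⟩

lemma Tri.perm2 {a b c : ℝ} (h : Tri a b c) : Tri a c b := ⟨by linarith [h.1], h.2.2, h.2.1⟩

lemma tri_zero {s : ℝ} (hs : 0 ≤ s) : Tri 0 s s := ⟨by linarith, by linarith, by linarith⟩

/-- Two-point amalgamation from the 4-values condition. -/
lemma amalg2 {R : Set ℝ} (h4 : FourValues R) {x f0 f1 g0 g1 : ℝ}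
    (hx : x ∈ R) (hf0 : f0 ∈ R) (hf1 : f1 ∈ R) (hg0 : g0 ∈ R) (hg1 : g1 ∈ R)
    (h1 : Tri x f0 f1) (h2 : Tri x g0 g1) :
    ∃ s ∈ R, Tri s f0 g0 ∧ Tri s f1 g1 := by
  have T1 : MetricTriple x f0 f1 := metricTriple_iff_tri.mpr h1
  have T1' : MetricTriple x f1 f0 := metricTriple_iff_tri.mpr h1.perm2
  have T2 : MetricTriple x g0 g1 := metricTriple_iff_tri.mpr h2
  have T2' : MetricTriple x g1 g0 := metricTriple_iff_tri.mpr h2.perm2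
  have casef0 : f1 ≤ f0 → g1 ≤ f0 → g0 ≤ f0 → ∃ s ∈ R, Tri s f0 g0 ∧ Tri s f1 g1 := by
    intro hb hc hd
    obtain ⟨y, hy, hy1, hy2, _⟩ := h4 f0 f1 g1 g0 hf0 hf1 hg1 hg0 ⟨x, hx, T1, T2', hb, hc, hd⟩
    exact ⟨y, hy, metricTriple_iff_tri.mp hy1, (metricTriple_iff_tri.mp hy2).perm2⟩
  have casef1 : f0 ≤ f1 → g0 ≤ f1 → g1 ≤ f1 → ∃ s ∈ R, Tri s f0 g0 ∧ Tri s f1 g1 := by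
    intro hb hc hd
    obtain ⟨y, hy, hy1, hy2, _⟩ := h4 f1 f0 g0 g1 hf1 hf0 hg0 hg1 ⟨x, hx, T1', T2, hb, hc, hd⟩
    exact ⟨y, hy, (metricTriple_iff_tri.mp hy2).perm2, metricTriple_iff_tri.mp hy1⟩
  have caseg0 : g1 ≤ g0 → f1 ≤ g0 → f0 ≤ g0 → ∃ s ∈ R, Tri s f0 g0 ∧ Tri s f1 g1 := by
    intro hb hc hd
    obtain ⟨y, hy, hy1, hy2, _⟩ := h4 g0 g1 f1 f0 hg0 hg1 hf1 hf0 ⟨x, hx, T2, T1', hb, hc, hd⟩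
    exact ⟨y, hy, (metricTriple_iff_tri.mp hy1).perm2, metricTriple_iff_tri.mp hy2⟩
  have caseg1 : g0 ≤ g1 → f0 ≤ g1 → f1 ≤ g1 → ∃ s ∈ R, Tri s f0 g0 ∧ Tri s f1 g1 := by
    intro hb hc hd
    obtain ⟨y, hy, hy1, hy2, _⟩ := h4 g1 g0 f0 f1 hg1 hg0 hf0 hf1 ⟨x, hx, T2', T1, hb, hc, hd⟩
    exact ⟨y, hy, metricTriple_iff_tri.mp hy2, (metricTriple_iff_tri.mp hy1).perm2⟩
  rcases le_total f0 f1 with hf | hf <;> rcases le_total g0 g1 with hg | hg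
  · rcases le_total f1 g1 with h | h
    · exact caseg1 hg (by linarith) h
    · exact casef1 hf (by linarith) h
  · rcases le_total f1 g0 with h | h
    · exact caseg0 hg h (by linarith)
    · exact casef1 hf h (by linarith)
  · rcases le_total f0 g1 with h | h
    · exact caseg1 hg h (by linarith)
    · exact casef0 hf h (by linarith)
  · rcases le_total f0 g0 with h | h
    · exact caseg0 hg (by linarith) h
    · exact casef0 hf (by linarith) h

/-- One-point amalgamation over a finite set. -/
lemma amalgOne {R : Set ℝ} (hR : R ⊆ Set.Ici 0) (h4 : FourValues R)
    {r0 : ℝ} (hr0 : r0 ∈ R) (hr0pos : 0 < r0)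
    {α : Type*} (G : Finset α) (dd : α → α → ℝ) (f g : α → ℝ)
    (hddR : ∀ i ∈ G, ∀ j ∈ G, dd i j ∈ R)
    (hfR : ∀ i ∈ G, f i ∈ R) (hgR : ∀ i ∈ G, g i ∈ R)
    (hfpos : ∀ i ∈ G, 0 < f i) (hgpos : ∀ i ∈ G, 0 < g i)
    (hf : ∀ i ∈ G, ∀ j ∈ G, Tri (dd i j) (f i) (f j))
    (hg : ∀ i ∈ G, ∀ j ∈ G, Tri (dd i j) (g i) (g j)) :
    ∃ s ∈ R, 0 < s ∧ ∀ i ∈ G, Tri s (f i) (g i) := by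
  rcases G.eq_empty_or_nonempty with rfl | hne
  · exact ⟨r0, hr0, hr0pos, by simp⟩
  obtain ⟨i0, hi0, hmax⟩ := G.exists_max_image (fun i => |f i - g i|) hne
  obtain ⟨i1, hi1, hmin⟩ := G.exists_min_image (fun i => f i + g i) hne
  rcases eq_or_lt_of_le (abs_nonneg (f i0 - g i0)) with hz | hz
  · -- f = g on G; take s = f i1
    have hfg : ∀ i ∈ G, f i = g i := by
      intro i hi
      have := hmax i hi
      have : |f i - g i| ≤ 0 := by linarith [hz.symm ▸ this]
      have := abs_nonpos_iff.mp this
      linarith [sub_eq_zero.mp this]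
    refine ⟨f i1, hfR i1 hi1, hfpos i1 hi1, fun i hi => ?_⟩
    have h1 : f i1 + g i1 ≤ f i + g i := hmin i hi
    have h2 : f i1 = g i1 := hfg i1 hi1
    have h3 : f i = g i := hfg i hi
    have hp := hfpos i hi
    have hp1 := hfpos i1 hi1
    exact ⟨by linarith, by linarith, by linarith⟩
  · -- strict max; use two-point amalgamation
    obtain ⟨s, hs, hs0, hs1⟩ := amalg2 h4 (hddR i0 hi0 i1 hi1) (hfR i0 hi0) (hfR i1 hi1)
      (hgR i0 hi0) (hgR i1 hi1) (hf i0 hi0 i1 hi1) (hg i0 hi0 i1 hi1)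
    have hsl : |f i0 - g i0| ≤ s := (tri_iff'.mp hs0).1
    have hsu : s ≤ f i1 + g i1 := (tri_iff'.mp hs1).2
    refine ⟨s, hs, lt_of_lt_of_le hz hsl, fun i hi => ?_⟩
    rw [tri_iff']
    exact ⟨le_trans (hmax i hi) hsl, le_trans hsu (hmin i hi)⟩

/-- Extension of Katětov functions over `R`, one point at a time, to a whole finite set. -/
lemma katetovExtend {R : Set ℝ} (hR : R ⊆ Set.Ici 0) (h4 : FourValues R)
    {r0 : ℝ} (hr0 : r0 ∈ R) (hr0pos : 0 < r0)
    {α : Type*} [DecidableEq α] (G : Finset α) (dd : α → α → ℝ)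
    (hddR : ∀ i ∈ G, ∀ j ∈ G, dd i j ∈ R)
    (hdd0 : ∀ i ∈ G, dd i i = 0)
    (hddpos : ∀ i ∈ G, ∀ j ∈ G, i ≠ j → 0 < dd i j)
    (hddsymm : ∀ i ∈ G, ∀ j ∈ G, dd i j = dd j i)
    (hddtri : ∀ i ∈ G, ∀ j ∈ G, ∀ k ∈ G, dd i k ≤ dd i j + dd j k) :
    ∀ n (F : Finset α), (G \ F).card = n → F ⊆ G → ∀ t : α → ℝ,
    (∀ i ∈ F, t i ∈ R) → (∀ i ∈ F, 0 < t i) →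
    (∀ i ∈ F, ∀ j ∈ F, Tri (dd i j) (t i) (t j)) →
    ∃ t' : α → ℝ, (∀ i ∈ F, t' i = t i) ∧ (∀ i ∈ G, t' i ∈ R) ∧ (∀ i ∈ G, 0 < t' i) ∧
      (∀ i ∈ G, ∀ j ∈ G, Tri (dd i j) (t' i) (t' j)) := by
  intro n
  induction n using Nat.strong_induction_on with
  | _ n IH =>
    intro F hcard hFG t htR htpos htK
    rcases (G \ F).eq_empty_or_nonempty with hemp | ⟨k, hk⟩
    · have hGF : G ⊆ F := fun i hi => by
        by_contra hiF
        exact Finset.notMem_empty i (hemp ▸ Finset.mem_sdiff.mpr ⟨hi, hiF⟩)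
      exact ⟨t, fun i _ => rfl, fun i hi => htR i (hGF hi), fun i hi => htpos i (hGF hi),
        fun i hi j hj => htK i (hGF hi) j (hGF hj)⟩
    · obtain ⟨hkG, hkF⟩ := Finset.mem_sdiff.mp hk
      -- amalgamate to get value at k
      obtain ⟨s, hsR, hspos, hsTri⟩ := amalgOne hR h4 hr0 hr0pos F dd t (fun i => dd i k)
        (fun i hi j hj => hddR i (hFG hi) j (hFG hj))
        htR (fun i hi => hddR i (hFG hi) k hkG)
        htpos (fun i hi => hddpos i (hFG hi) k hkG (fun h => hkF (by rwa [h] at hi)))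
        htK
        (fun i hi j hj => by
          have h1 := hddtri i (hFG hi) k hkG j (hFG hj)
          have h2 := hddtri i (hFG hi) j (hFG hj) k hkG
          have h3 := hddtri j (hFG hj) i (hFG hi) k hkG
          have e1 := hddsymm k hkG j (hFG hj)
          have e2 := hddsymm j (hFG hj) i (hFG hi)
          exact ⟨by linarith, by linarith, by linarith⟩)
      set t1 : α → ℝ := Function.update t k s with ht1
      have ht1F : ∀ i ∈ F, t1 i = t i := fun i hi =>
        Function.update_of_ne (fun h => hkF (by rwa [h] at hi)) s t
      have ht1k : t1 k = s := Function.update_self k s t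
      have hFk : insert k F ⊆ G := Finset.insert_subset hkG hFG
      have hcard' : (G \ insert k F).card < n := by
        have : G \ insert k F ⊂ G \ F := by
          apply Finset.ssubset_iff_of_subset (Finset.sdiff_subset_sdiff le_rfl
            (Finset.subset_insert k F)) |>.mpr
          exact ⟨k, hk, by simp⟩
        have := Finset.card_lt_card this
        omega
      obtain ⟨t', h1, h2, h3, h4'⟩ := IH _ hcard' (insert k F) rfl hFk t1
        (fun i hi => by
          rcases Finset.mem_insert.mp hi with h' | hi
          · rw [h', ht1k]; exact hsR
          · rw [ht1F i hi]; exact htR i hi)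
        (fun i hi => by
          rcases Finset.mem_insert.mp hi with h' | hi
          · rw [h', ht1k]; exact hspos
          · rw [ht1F i hi]; exact htpos i hi)
        (fun i hi j hj => by
          rcases Finset.mem_insert.mp hi with h1 | hi <;>
            rcases Finset.mem_insert.mp hj with h2 | hj
          · rw [h1, h2, ht1k, hdd0 k hkG]; exact tri_zero (le_of_lt hspos)
          · rw [h1, ht1k, ht1F j hj, hddsymm k hkG j (hFG hj)]
            have := hsTri j hj
            exact ⟨by linarith [this.2.2], by linarith [this.1], by linarith [this.2.1]⟩
          · rw [h2, ht1k, ht1F i hi]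
            have := hsTri i hi
            exact ⟨by linarith [this.2.2], by linarith [this.2.1], by linarith [this.1]⟩
          · rw [ht1F i hi, ht1F j hj]; exact htK i hi j hj)
      exact ⟨t', fun i hi => by rw [h1 i (Finset.mem_insert_of_mem hi), ht1F i hi],
        h2, h3, h4'⟩

/-- Bundle of data for the construction of the `R`-Urysohn space. -/
structure USetup where
  R : Set ℝ
  hsub : R ⊆ Set.Ici 0
  h0 : (0:ℝ) ∈ R
  h4 : FourValues R
  eR : ℕ → ℝ
  heR : ∀ n, eR n ∈ R
  heRsurj : ∀ r ∈ R, ∃ n, eR n = r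
  r0 : ℝ
  hr0 : r0 ∈ R
  hr0pos : 0 < r0
  eps : ℝ
  heps : 0 < eps
  hepssep : ∀ r ∈ R, r ≠ 0 → eps ≤ r

noncomputable def taskEnum : ℕ → Finset ℕ × List ℕ :=
  (exists_surjective_nat (Finset ℕ × List ℕ)).choose

lemma taskEnum_surj : Function.Surjective taskEnum :=
  (exists_surjective_nat (Finset ℕ × List ℕ)).choose_spec

noncomputable def tskF (n : ℕ) : Finset ℕ := (taskEnum (Nat.unpair n).2).1

noncomputable def tval (S : USetup) (n : ℕ) : ℕ → ℝ :=
  fun i => S.eR ((taskEnum (Nat.unpair n).2).2.getD i 0)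

/-- `w` is an admissible distance-vector for the new point `n`. -/
def GoodW (S : USetup) (n : ℕ) (prev : ℕ → ℕ → ℝ) (w : ℕ → ℝ) : Prop :=
  (∀ k < n, w k ∈ S.R ∧ 0 < w k) ∧ ∀ i < n, ∀ j < n, Tri (prev i j) (w i) (w j)

open scoped Classical in
noncomputable def wfun (S : USetup) (n : ℕ) (prev : ℕ → ℕ → ℝ) : ℕ → ℝ :=
  if h : ∃ w, GoodW S n prev w ∧ ∀ i ∈ tskF n, w i = tval S n i then h.choose
  else if h2 : ∃ w, GoodW S n prev w then h2.choose else fun _ => S.r0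

lemma wfun_good {S : USetup} {n : ℕ} {prev : ℕ → ℕ → ℝ}
    (h : ∃ w, GoodW S n prev w) : GoodW S n prev (wfun S n prev) := by
  classical
  unfold wfun
  by_cases h1 : ∃ w, GoodW S n prev w ∧ ∀ i ∈ tskF n, w i = tval S n i
  · rw [dif_pos h1]; exact h1.choose_spec.1
  · rw [dif_neg h1, dif_pos h]; exact h.choose_spec

lemma wfun_task {S : USetup} {n : ℕ} {prev : ℕ → ℕ → ℝ}
    (h : ∃ w, GoodW S n prev w ∧ ∀ i ∈ tskF n, w i = tval S n i) :
    ∀ i ∈ tskF n, wfun S n prev i = tval S n i := by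
  classical
  unfold wfun
  rw [dif_pos h]
  exact h.choose_spec.2

noncomputable def dmat (S : USetup) : ℕ → ℕ → ℕ → ℝ
  | 0 => fun _ _ => 0
  | n+1 => fun i j =>
      if i < n ∧ j < n then dmat S n i j
      else if i = j then 0
      else if j = n then wfun S n (dmat S n) i
      else if i = n then wfun S n (dmat S n) j
      else 0

lemma dmat_lt {S : USetup} {n i j : ℕ} (hi : i < n) (hj : j < n) :
    dmat S (n+1) i j = dmat S n i j := by
  simp [dmat, hi, hj]

lemma dmat_in {S : USetup} {n i : ℕ} (hi : i < n) :
    dmat S (n+1) i n = wfun S n (dmat S n) i := by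
  simp [dmat, hi.ne, Nat.lt_irrefl]

lemma dmat_ni {S : USetup} {n i : ℕ} (hi : i < n) :
    dmat S (n+1) n i = wfun S n (dmat S n) i := by
  simp [dmat, hi.ne', Nat.lt_irrefl, hi.ne]

lemma dmat_nn {S : USetup} {n : ℕ} : dmat S (n+1) n n = 0 := by
  simp [dmat, Nat.lt_irrefl]

lemma dmat_agree {S : USetup} : ∀ {m n : ℕ}, m ≤ n → ∀ {i j : ℕ}, i < m → j < m →
    dmat S n i j = dmat S m i j := by
  intro m n h
  induction n, h using Nat.le_induction with
  | base => intro i j _ _; rfl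
  | succ n hmn IH =>
    intro i j hi hj
    rw [dmat_lt (lt_of_lt_of_le hi hmn) (lt_of_lt_of_le hj hmn)]
    exact IH hi hj

/-- The matrix `dmat S n` is a metric with values in `R` on points `< n`. -/
def OkM (S : USetup) (n : ℕ) : Prop :=
  (∀ i, i < n → dmat S n i i = 0) ∧
  (∀ i, i < n → ∀ j, j < n → dmat S n i j = dmat S n j i) ∧
  (∀ i, i < n → ∀ j, j < n → i ≠ j → 0 < dmat S n i j) ∧
  (∀ i, i < n → ∀ j, j < n → dmat S n i j ∈ S.R) ∧
  (∀ i, i < n → ∀ j, j < n → ∀ k, k < n → dmat S n i k ≤ dmat S n i j + dmat S n j k)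

lemma okM (S : USetup) : ∀ n, OkM S n := by
  intro n
  induction n with
  | zero => exact ⟨fun i hi => absurd hi (Nat.not_lt_zero i), fun i hi => absurd hi (Nat.not_lt_zero i),
      fun i hi => absurd hi (Nat.not_lt_zero i), fun i hi => absurd hi (Nat.not_lt_zero i),
      fun i hi => absurd hi (Nat.not_lt_zero i)⟩
  | succ n IH =>
    obtain ⟨IH0, IHs, IHp, IHm, IHt⟩ := IH
    -- existence of a good vector
    have hex : ∃ w, GoodW S n (dmat S n) w := by
      rcases Nat.eq_zero_or_pos n with rfl | hn
      · exact ⟨fun _ => S.r0, ⟨fun k hk => absurd hk (Nat.not_lt_zero k),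
          fun i hi => absurd hi (Nat.not_lt_zero i)⟩⟩
      · obtain ⟨t', _, h2, h3, h4'⟩ := katetovExtend S.hsub S.h4 S.hr0 S.hr0pos
          (Finset.range n) (dmat S n)
          (fun i hi j hj => IHm i (Finset.mem_range.mp hi) j (Finset.mem_range.mp hj))
          (fun i hi => IH0 i (Finset.mem_range.mp hi))
          (fun i hi j hj hne => IHp i (Finset.mem_range.mp hi) j (Finset.mem_range.mp hj) hne)
          (fun i hi j hj => IHs i (Finset.mem_range.mp hi) j (Finset.mem_range.mp hj))
          (fun i hi j hj k hk => IHt i (Finset.mem_range.mp hi) j (Finset.mem_range.mp hj)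
            k (Finset.mem_range.mp hk))
          (Finset.range n \ {0}).card {0} rfl
          (by simpa using Finset.mem_range.mpr hn)
          (fun _ => S.r0)
          (fun i _ => S.hr0) (fun i _ => S.hr0pos)
          (fun i hi j hj => by
            rw [Finset.mem_singleton.mp hi, Finset.mem_singleton.mp hj, IH0 0 hn]
            exact tri_zero (le_of_lt S.hr0pos))
        exact ⟨t', ⟨fun k hk => ⟨h2 k (Finset.mem_range.mpr hk), h3 k (Finset.mem_range.mpr hk)⟩,
          fun i hi j hj => h4' i (Finset.mem_range.mpr hi) j (Finset.mem_range.mpr hj)⟩⟩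
    have hw := wfun_good hex
    set w := wfun S n (dmat S n) with hwdef
    have hwpos : ∀ k, k < n → 0 < w k := fun k hk => (hw.1 k hk).2
    have hwR : ∀ k, k < n → w k ∈ S.R := fun k hk => (hw.1 k hk).1
    have hwT : ∀ i, i < n → ∀ j, j < n → Tri (dmat S n i j) (w i) (w j) := hw.2
    have hnn : ∀ i, i < n → (0:ℝ) ≤ dmat S n i i + 1 := fun i hi => by
      rw [IH0 i hi]; norm_num
    -- case analysis helper
    have hcase : ∀ i, i < n + 1 → i < n ∨ i = n := fun i hi => by omega
    refine ⟨?_, ?_, ?_, ?_, ?_⟩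
    · intro i hi
      rcases hcase i hi with h | h
      · rw [dmat_lt h h]; exact IH0 i h
      · rw [h]; exact dmat_nn
    · intro i hi j hj
      rcases hcase i hi with h1 | h1 <;> rcases hcase j hj with h2 | h2
      · rw [dmat_lt h1 h2, dmat_lt h2 h1]; exact IHs i h1 j h2
      · rw [h2, dmat_in h1, dmat_ni h1]
      · rw [h1, dmat_ni h2, dmat_in h2]
      · rw [h1, h2]
    · intro i hi j hj hne
      rcases hcase i hi with h1 | h1 <;> rcases hcase j hj with h2 | h2
      · rw [dmat_lt h1 h2]; exact IHp i h1 j h2 hne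
      · rw [h2, dmat_in h1]; exact hwpos i h1
      · rw [h1, dmat_ni h2]; exact hwpos j h2
      · exact absurd (h1.trans h2.symm) hne
    · intro i hi j hj
      rcases hcase i hi with h1 | h1 <;> rcases hcase j hj with h2 | h2
      · rw [dmat_lt h1 h2]; exact IHm i h1 j h2
      · rw [h2, dmat_in h1]; exact hwR i h1
      · rw [h1, dmat_ni h2]; exact hwR j h2
      · rw [h1, h2, dmat_nn]; exact S.h0
    · intro i hi j hj k hk
      rcases hcase i hi with h1 | h1 <;> rcases hcase j hj with h2 | h2 <;>
        rcases hcase k hk with h3 | h3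
      · rw [dmat_lt h1 h3, dmat_lt h1 h2, dmat_lt h2 h3]; exact IHt i h1 j h2 k h3
      · rw [h3, dmat_in h1, dmat_lt h1 h2, dmat_in h2]
        exact (hwT i h1 j h2).2.1
      · rw [h2, dmat_lt h1 h3, dmat_in h1, dmat_ni h3]
        exact (hwT i h1 k h3).1
      · rw [h2, h3, dmat_in h1, dmat_nn]
        linarith [hwpos i h1]
      · rw [h1, dmat_ni h3, dmat_ni h2, dmat_lt h2 h3]
        linarith [(hwT j h2 k h3).2.2]
      · rw [h1, h3, dmat_nn, dmat_ni h2, dmat_in h2]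
        linarith [hwpos j h2, hw.2 j h2 j h2]
      · rw [h1, h2, dmat_nn, dmat_ni h3]
        linarith [hwpos k h3]
      · rw [h1, h2, h3, dmat_nn]; norm_num

/-- The limit distance function on `ℕ`. -/
noncomputable def dUr (S : USetup) (i j : ℕ) : ℝ := dmat S (max i j + 1) i j

lemma dUr_eq {S : USetup} {n i j : ℕ} (hi : i < n) (hj : j < n) :
    dUr S i j = dmat S n i j := by
  exact (dmat_agree (show max i j + 1 ≤ n by omega) (by omega) (by omega)).symm

lemma dUr_self (S : USetup) (i : ℕ) : dUr S i i = 0 :=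
  (dUr_eq (Nat.lt_succ_self i) (Nat.lt_succ_self i)).trans ((okM S (i+1)).1 i (Nat.lt_succ_self i))

lemma dUr_comm (S : USetup) (i j : ℕ) : dUr S i j = dUr S j i := by
  set n := max i j + 1
  have hi : i < n := by omega
  have hj : j < n := by omega
  rw [dUr_eq hi hj, dUr_eq hj hi]
  exact (okM S n).2.1 i hi j hj

lemma dUr_pos {S : USetup} {i j : ℕ} (h : i ≠ j) : 0 < dUr S i j := by
  set n := max i j + 1
  have hi : i < n := by omega
  have hj : j < n := by omega
  rw [dUr_eq hi hj]
  exact (okM S n).2.2.1 i hi j hj h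

lemma dUr_mem (S : USetup) (i j : ℕ) : dUr S i j ∈ S.R := by
  set n := max i j + 1
  have hi : i < n := by omega
  have hj : j < n := by omega
  rw [dUr_eq hi hj]
  exact (okM S n).2.2.2.1 i hi j hj

lemma dUr_triangle (S : USetup) (i j k : ℕ) : dUr S i k ≤ dUr S i j + dUr S j k := by
  set n := max (max i j) k + 1
  have hi : i < n := by omega
  have hj : j < n := by omega
  have hk : k < n := by omega
  rw [dUr_eq hi hk, dUr_eq hi hj, dUr_eq hj hk]
  exact (okM S n).2.2.2.2 i hi j hj k hk

lemma dUr_nonneg (S : USetup) (i j : ℕ) : 0 ≤ dUr S i j := S.hsub (dUr_mem S i j)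

/-- Realization of Katětov functions: the key extension property. -/
lemma rea (S : USetup) (F : Finset ℕ) (t : ℕ → ℝ)
    (htR : ∀ i ∈ F, t i ∈ S.R) (htpos : ∀ i ∈ F, 0 < t i)
    (htK : ∀ i ∈ F, ∀ j ∈ F, Tri (dUr S i j) (t i) (t j)) :
    ∃ p : ℕ, (∀ i ∈ F, p ≠ i) ∧ ∀ i ∈ F, dUr S p i = t i := by
  classical
  set m := F.sup id + 1 with hm
  have hFm : ∀ i ∈ F, i < m := fun i hi => Nat.lt_succ_of_le (Finset.le_sup (f := id) hi)
  set li : ℕ → ℕ := fun i => if h : t i ∈ S.R then (S.heRsurj _ h).choose else 0 with hli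
  have hli' : ∀ i ∈ F, S.eR (li i) = t i := by
    intro i hi
    simp only [hli, dif_pos (htR i hi)]
    exact (S.heRsurj _ (htR i hi)).choose_spec
  set l : List ℕ := (List.range m).map li with hl
  have hgetD : ∀ i, i < m → l.getD i 0 = li i := by
    intro i hi
    simp [hl, List.getD, List.getElem?_map, List.getElem?_range, hi]
  obtain ⟨kk, hkk⟩ := taskEnum_surj (F, l)
  set N := Nat.pair m kk with hN
  have hunp : (Nat.unpair N).2 = kk := by simp [hN]
  have hmN : m ≤ N := Nat.left_le_pair m kk
  have htskF : tskF N = F := by rw [tskF, hunp, hkk]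
  have htval : ∀ i ∈ F, tval S N i = t i := by
    intro i hi
    rw [tval, hunp, hkk]
    simp only
    rw [hgetD i (hFm i hi)]
    exact hli' i hi
  have hFN : ∀ i ∈ F, i < N := fun i hi => lt_of_lt_of_le (hFm i hi) hmN
  -- existence of the good extension agreeing with the task
  have hO := okM S N
  have hex : ∃ w, GoodW S N (dmat S N) w ∧ ∀ i ∈ tskF N, w i = tval S N i := by
    obtain ⟨t', h1, h2, h3, h4'⟩ := katetovExtend S.hsub S.h4 S.hr0 S.hr0pos
      (Finset.range N) (dmat S N)
      (fun i hi j hj => hO.2.2.2.1 i (Finset.mem_range.mp hi) j (Finset.mem_range.mp hj))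
      (fun i hi => hO.1 i (Finset.mem_range.mp hi))
      (fun i hi j hj hne => hO.2.2.1 i (Finset.mem_range.mp hi) j (Finset.mem_range.mp hj) hne)
      (fun i hi j hj => hO.2.1 i (Finset.mem_range.mp hi) j (Finset.mem_range.mp hj))
      (fun i hi j hj k hk => hO.2.2.2.2 i (Finset.mem_range.mp hi) j (Finset.mem_range.mp hj)
        k (Finset.mem_range.mp hk))
      (Finset.range N \ F).card F rfl
      (fun i hi => Finset.mem_range.mpr (hFN i hi)) t htR htpos
      (fun i hi j hj => by rw [← dUr_eq (hFN i hi) (hFN j hj)]; exact htK i hi j hj)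
    refine ⟨t', ⟨fun k hk => ⟨h2 k (Finset.mem_range.mpr hk), h3 k (Finset.mem_range.mpr hk)⟩,
      fun i hi j hj => h4' i (Finset.mem_range.mpr hi) j (Finset.mem_range.mpr hj)⟩, ?_⟩
    intro i hi
    rw [htskF] at hi
    rw [h1 i hi, htval i hi]
  have hwt := wfun_task hex
  refine ⟨N, fun i hi => (hFN i hi).ne', fun i hi => ?_⟩
  have hiN := hFN i hi
  have : dUr S N i = wfun S N (dmat S N) i := by
    unfold dUr
    rw [max_eq_left (le_of_lt hiN) ]
    exact dmat_ni hiN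
  rw [this, hwt i (htskF.symm ▸ hi), htval i hi]

/-- The underlying type of the constructed space. -/
def Usp (_S : USetup) : Type := ℕ

noncomputable def uspMetric (S : USetup) : MetricSpace (Usp S) :=
  { dist := fun a b => dUr S a b
    dist_self := fun a => dUr_self S a
    dist_comm := fun a b => dUr_comm S a b
    dist_triangle := fun a b c => dUr_triangle S a b c
    eq_of_dist_eq_zero := fun {a b} h => by
      by_contra hne
      exact absurd h (ne_of_gt (dUr_pos hne)) }

open scoped Classical in
/-- Iterative construction of an isometric copy of a countable metric space. -/
noncomputable def embMat (S : USetup) {N : Type} [MetricSpace N] (e : ℕ → N) : ℕ → ℕ → ℕ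
  | 0 => fun _ => 0
  | n+1 => fun k =>
      if k < n then embMat S e n k
      else if k = n then
        (if h : ∃ j, j < n ∧ e j = e n then embMat S e n h.choose
         else if h2 : ∃ p : ℕ, ∀ j, j < n → dUr S p (embMat S e n j) = dist (e n) (e j)
           then h2.choose else 0)
      else 0

noncomputable def embSeq (S : USetup) {N : Type} [MetricSpace N] (e : ℕ → N) (n : ℕ) : ℕ :=
  embMat S e (n+1) n

lemma embMat_agree {S : USetup} {N : Type} [MetricSpace N] {e : ℕ → N} :
    ∀ {m n : ℕ}, m ≤ n → ∀ {k : ℕ}, k < m → embMat S e n k = embMat S e m k := by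
  intro m n h
  induction n, h using Nat.le_induction with
  | base => intro k _; rfl
  | succ n hmn IH =>
    intro k hk
    have hkn : k < n := lt_of_lt_of_le hk hmn
    rw [show embMat S e (n+1) k = embMat S e n k by simp [embMat, hkn]]
    exact IH hk

lemma embSeq_eq {S : USetup} {N : Type} [MetricSpace N] {e : ℕ → N} {n m : ℕ} (h : n < m) :
    embMat S e m n = embSeq S e n := embMat_agree h (Nat.lt_succ_self n)

/-- The key isometry property of `embSeq`. -/
lemma embSeq_iso (S : USetup) {N : Type} [MetricSpace N] (e : ℕ → N)
    (hND : ∀ a b : N, dist a b ∈ S.R) :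
    ∀ i j, dUr S (embSeq S e i) (embSeq S e j) = dist (e i) (e j) := by
  classical
  have main : ∀ n, ∀ j, j < n → dUr S (embSeq S e n) (embSeq S e j) = dist (e n) (e j) := by
    intro n
    induction n using Nat.strong_induction_on with
    | _ n IH =>
      intro j hj
      have hfull : ∀ i k, i < n → k < n →
          dUr S (embSeq S e i) (embSeq S e k) = dist (e i) (e k) := by
        intro i k hi hk
        rcases lt_trichotomy i k with h | h | h
        · rw [dUr_comm, IH k hk i h, dist_comm]
        · rw [h, dUr_self, dist_self]
        · exact IH i hi k h
      have hval : embSeq S e n = (if h : ∃ j, j < n ∧ e j = e n then embMat S e n h.choose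
         else if h2 : ∃ p : ℕ, ∀ j, j < n → dUr S p (embMat S e n j) = dist (e n) (e j)
           then h2.choose else 0) := by
        simp [embSeq, embMat]
      by_cases h : ∃ j', j' < n ∧ e j' = e n
      · have hj0 := h.choose_spec
        rw [hval, dif_pos h, embSeq_eq hj0.1, hfull _ j hj0.1 hj, hj0.2]
      · -- fresh point: realize the type
        have h2 : ∃ p : ℕ, ∀ j, j < n → dUr S p (embMat S e n j) = dist (e n) (e j) := by
          set F : Finset ℕ := (Finset.range n).image (fun j => embSeq S e j) with hF
          set t : ℕ → ℝ := fun u =>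
            if hu : ∃ j, j < n ∧ embSeq S e j = u then dist (e n) (e hu.choose) else 1 with ht
          have htv : ∀ j, j < n → t (embSeq S e j) = dist (e n) (e j) := by
            intro j hjn
            have hu : ∃ j', j' < n ∧ embSeq S e j' = embSeq S e j := ⟨j, hjn, rfl⟩
            have hspec := hu.choose_spec
            have : dist (e hu.choose) (e j) = 0 := by
              rw [← hfull _ _ hspec.1 hjn, hspec.2, dUr_self]
            have := eq_of_dist_eq_zero this
            simp only [ht, dif_pos hu, this]
          obtain ⟨p, -, hp⟩ := rea S F t
            (by
              intro u hu
              obtain ⟨j, hjn, rfl⟩ := Finset.mem_image.mp hu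
              rw [htv j (Finset.mem_range.mp hjn)]
              exact hND _ _)
            (by
              intro u hu
              obtain ⟨j, hjn, rfl⟩ := Finset.mem_image.mp hu
              rw [htv j (Finset.mem_range.mp hjn)]
              rw [dist_pos]
              intro heq
              exact h ⟨j, Finset.mem_range.mp hjn, heq.symm⟩)
            (by
              intro u hu v hv
              obtain ⟨j, hjn, rfl⟩ := Finset.mem_image.mp hu
              obtain ⟨k, hkn, rfl⟩ := Finset.mem_image.mp hv
              rw [htv j (Finset.mem_range.mp hjn), htv k (Finset.mem_range.mp hkn),
                hfull j k (Finset.mem_range.mp hjn) (Finset.mem_range.mp hkn)]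
              refine ⟨?_, ?_, ?_⟩
              · calc dist (e j) (e k) ≤ dist (e j) (e n) + dist (e n) (e k) := dist_triangle _ _ _
                  _ = dist (e n) (e j) + dist (e n) (e k) := by rw [dist_comm (e j)]
              · calc dist (e n) (e j) ≤ dist (e n) (e k) + dist (e k) (e j) := dist_triangle _ _ _
                  _ = dist (e j) (e k) + dist (e n) (e k) := by rw [dist_comm (e k) (e j)]; ring
              · calc dist (e n) (e k) ≤ dist (e n) (e j) + dist (e j) (e k) := dist_triangle _ _ _
                  _ = dist (e j) (e k) + dist (e n) (e j) := by ring)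
          refine ⟨p, fun j hjn => ?_⟩
          rw [embSeq_eq hjn]
          have hmem : embSeq S e j ∈ F :=
            Finset.mem_image.mpr ⟨j, Finset.mem_range.mpr hjn, rfl⟩
          rw [hp _ hmem, htv j hjn]
        rw [hval, dif_neg h, dif_pos h2]
        have := h2.choose_spec j hj
        rw [embSeq_eq hj] at this
        exact this
  intro i j
  rcases lt_trichotomy i j with h | h | h
  · rw [dUr_comm, main j i h, dist_comm]
  · rw [h, dUr_self, dist_self]
  · exact main i j h

section Homog

variable (S : USetup)

/-- A finite set of pairs is "good" if it is a partial isometry. -/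
def GoodP (T : Finset (ℕ × ℕ)) : Prop :=
  ∀ q ∈ T, ∀ q' ∈ T, dUr S q.1 q'.1 = dUr S q.2 q'.2

open scoped Classical in
noncomputable def extL (T : Finset (ℕ × ℕ)) (n : ℕ) : Finset (ℕ × ℕ) :=
  if n ∈ T.image Prod.fst then T
  else if h : ∃ p : ℕ, ∀ q ∈ T, dUr S p q.2 = dUr S n q.1 then insert (n, h.choose) T else T

open scoped Classical in
noncomputable def extR (T : Finset (ℕ × ℕ)) (n : ℕ) : Finset (ℕ × ℕ) :=
  if n ∈ T.image Prod.snd then T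
  else if h : ∃ p : ℕ, ∀ q ∈ T, dUr S p q.1 = dUr S n q.2 then insert (h.choose, n) T else T

noncomputable def chain (base : Finset (ℕ × ℕ)) : ℕ → Finset (ℕ × ℕ)
  | 0 => base
  | n+1 => extR S (extL S (chain base n) n) n

lemma subset_extL (T : Finset (ℕ × ℕ)) (n : ℕ) : T ⊆ extL S T n := by
  classical
  unfold extL
  split_ifs <;> first | rfl | exact Finset.subset_insert _ _

lemma subset_extR (T : Finset (ℕ × ℕ)) (n : ℕ) : T ⊆ extR S T n := by
  classical
  unfold extR
  split_ifs <;> first | rfl | exact Finset.subset_insert _ _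

lemma goodP_extL {T : Finset (ℕ × ℕ)} (hT : GoodP S T) (n : ℕ) : GoodP S (extL S T n) := by
  classical
  unfold extL
  split_ifs with h1 h2
  · exact hT
  · intro q hq q' hq'
    rcases Finset.mem_insert.mp hq with rfl | hq <;>
      rcases Finset.mem_insert.mp hq' with h' | hq'
    · rw [h']; simp [dUr_self]
    · exact (h2.choose_spec q' hq').symm
    · rw [h']
      simp only
      rw [dUr_comm S q.1 n, dUr_comm S q.2 _]
      exact (h2.choose_spec q hq).symm
    · exact hT q hq q' hq'
  · exact hT

lemma goodP_extR {T : Finset (ℕ × ℕ)} (hT : GoodP S T) (n : ℕ) : GoodP S (extR S T n) := by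
  classical
  unfold extR
  split_ifs with h1 h2
  · exact hT
  · intro q hq q' hq'
    rcases Finset.mem_insert.mp hq with rfl | hq <;>
      rcases Finset.mem_insert.mp hq' with h' | hq'
    · rw [h']; simp [dUr_self]
    · exact h2.choose_spec q' hq'
    · rw [h']
      simp only
      rw [dUr_comm S q.1 _, dUr_comm S q.2 n]
      exact h2.choose_spec q hq
    · exact hT q hq q' hq'
  · exact hT

lemma goodP_chain (base : Finset (ℕ × ℕ)) (hb : GoodP S base) (n : ℕ) :
    GoodP S (chain S base n) := by
  induction n with
  | zero => exact hb
  | succ n IH => exact goodP_extR S (goodP_extL S IH n) n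

lemma chain_mono (base : Finset (ℕ × ℕ)) : ∀ {m n : ℕ}, m ≤ n →
    chain S base m ⊆ chain S base n := by
  intro m n h
  induction n, h using Nat.le_induction with
  | base => exact Finset.Subset.refl _
  | succ n hmn IH =>
    exact Finset.Subset.trans IH (Finset.Subset.trans (subset_extL S _ n) (subset_extR S _ n))

/-- The extension property: if `n` is not yet in the left domain, the partner exists. -/
lemma extend_exists_L {T : Finset (ℕ × ℕ)} (hT : GoodP S T) {n : ℕ}
    (hn : n ∉ T.image Prod.fst) :
    ∃ p : ℕ, ∀ q ∈ T, dUr S p q.2 = dUr S n q.1 := by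
  classical
  set F : Finset ℕ := T.image Prod.snd with hF
  set t : ℕ → ℝ := fun u => if hu : ∃ x, (x, u) ∈ T then dUr S n hu.choose else 1 with ht
  have htv : ∀ q ∈ T, t q.2 = dUr S n q.1 := by
    intro q hq
    have hu : ∃ x, (x, q.2) ∈ T := ⟨q.1, hq⟩
    have hspec := hu.choose_spec
    have : dUr S hu.choose q.1 = 0 := by
      have := hT _ hspec _ hq
      simpa [dUr_self] using this
    have heq : hu.choose = q.1 := by
      by_contra hne
      exact absurd this (ne_of_gt (dUr_pos hne))
    simp only [ht, dif_pos hu, heq]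
  obtain ⟨p, -, hp⟩ := rea S F t
    (by
      intro u hu
      obtain ⟨q, hq, rfl⟩ := Finset.mem_image.mp hu
      rw [htv q hq]; exact dUr_mem S _ _)
    (by
      intro u hu
      obtain ⟨q, hq, rfl⟩ := Finset.mem_image.mp hu
      rw [htv q hq]
      refine dUr_pos (fun h => hn ?_)
      exact Finset.mem_image.mpr ⟨q, hq, h.symm⟩)
    (by
      intro u hu v hv
      obtain ⟨q, hq, rfl⟩ := Finset.mem_image.mp hu
      obtain ⟨q', hq', rfl⟩ := Finset.mem_image.mp hv
      rw [htv q hq, htv q' hq', ← hT q hq q' hq']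
      refine ⟨?_, ?_, ?_⟩
      · calc dUr S q.1 q'.1 ≤ dUr S q.1 n + dUr S n q'.1 := dUr_triangle S _ _ _
          _ = dUr S n q.1 + dUr S n q'.1 := by rw [dUr_comm S q.1 n]
      · calc dUr S n q.1 ≤ dUr S n q'.1 + dUr S q'.1 q.1 := dUr_triangle S _ _ _
          _ = dUr S q.1 q'.1 + dUr S n q'.1 := by rw [dUr_comm S q'.1 q.1]; ring
      · calc dUr S n q'.1 ≤ dUr S n q.1 + dUr S q.1 q'.1 := dUr_triangle S _ _ _
          _ = dUr S q.1 q'.1 + dUr S n q.1 := by ring)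
  refine ⟨p, fun q hq => ?_⟩
  rw [hp q.2 (Finset.mem_image.mpr ⟨q, hq, rfl⟩), htv q hq]

lemma extend_exists_R {T : Finset (ℕ × ℕ)} (hT : GoodP S T) {n : ℕ}
    (hn : n ∉ T.image Prod.snd) :
    ∃ p : ℕ, ∀ q ∈ T, dUr S p q.1 = dUr S n q.2 := by
  classical
  have hT' : GoodP S (T.image (fun q => (q.2, q.1))) := by
    intro q hq q' hq'
    obtain ⟨r, hr, rfl⟩ := Finset.mem_image.mp hq
    obtain ⟨r', hr', rfl⟩ := Finset.mem_image.mp hq'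
    exact (hT r hr r' hr').symm
  have hn' : n ∉ (T.image (fun q => (q.2, q.1))).image Prod.fst := by
    intro hmem
    refine hn ?_
    obtain ⟨q, hq, hq2⟩ := Finset.mem_image.mp hmem
    obtain ⟨r, hr, rfl⟩ := Finset.mem_image.mp hq
    exact Finset.mem_image.mpr ⟨r, hr, hq2⟩
  obtain ⟨p, hp⟩ := extend_exists_L S hT' hn'
  refine ⟨p, fun q hq => ?_⟩
  have := hp (q.2, q.1) (Finset.mem_image.mpr ⟨q, hq, rfl⟩)
  simpa using this

lemma mem_left_chain (base : Finset (ℕ × ℕ)) (hb : GoodP S base) (n : ℕ) :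
    ∃ p, (n, p) ∈ chain S base (n+1) := by
  classical
  have hgood := goodP_chain S base hb n
  have : ∃ p, (n, p) ∈ extL S (chain S base n) n := by
    unfold extL
    split_ifs with h1 h2
    · obtain ⟨q, hq, hq1⟩ := Finset.mem_image.mp h1
      exact ⟨q.2, by rwa [show (n, q.2) = q by rw [← hq1]]⟩
    · exact ⟨h2.choose, Finset.mem_insert_self _ _⟩
    · exact absurd (extend_exists_L S hgood h1) h2
  obtain ⟨p, hp⟩ := this
  exact ⟨p, subset_extR S _ n hp⟩

lemma mem_right_chain (base : Finset (ℕ × ℕ)) (hb : GoodP S base) (n : ℕ) :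
    ∃ p, (p, n) ∈ chain S base (n+1) := by
  classical
  have hgood : GoodP S (extL S (chain S base n) n) :=
    goodP_extL S (goodP_chain S base hb n) n
  show ∃ p, (p, n) ∈ extR S (extL S (chain S base n) n) n
  unfold extR
  split_ifs with h1 h2
  · obtain ⟨q, hq, hq2⟩ := Finset.mem_image.mp h1
    exact ⟨q.1, by rwa [show (q.1, n) = q by rw [← hq2]]⟩
  · exact ⟨h2.choose, Finset.mem_insert_self _ _⟩
  · exact absurd (extend_exists_R S hgood h1) h2

end Homog

theorem reverseMain (S : USetup) :
    ∃ (X : Type) (inst : MetricSpace X), @IsUrysohn X inst ∧ @distSet X inst = S.R := by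
  classical
  refine ⟨Usp S, uspMetric S, ?_⟩
  letI : MetricSpace (Usp S) := uspMetric S
  haveI : Countable (Usp S) := inferInstanceAs (Countable ℕ)
  have hdist : ∀ a b : Usp S, dist a b = dUr S a b := fun _ _ => rfl
  -- the distance set is R
  have hds : distSet (Usp S) = S.R := by
    ext r
    constructor
    · rintro ⟨p, q, rfl⟩
      exact dUr_mem S p q
    · intro hr
      by_cases hr0 : r = 0
      · refine ⟨(0:ℕ), (0:ℕ), ?_⟩
        exact (dUr_self S 0).trans hr0.symm
      · have hrpos : 0 < r := lt_of_le_of_ne (S.hsub hr) (Ne.symm hr0)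
        obtain ⟨p, -, hp⟩ := rea S {0} (fun _ => r) (fun i _ => hr) (fun i _ => hrpos)
          (by
            intro i hi j hj
            rw [Finset.mem_singleton] at hi hj
            subst hi; subst hj
            rw [dUr_self]
            exact tri_zero hrpos.le)
        exact ⟨(p:ℕ), (0:ℕ), hp 0 (Finset.mem_singleton_self 0)⟩
  -- homogeneity
  have hhom : IsHomogeneous (Usp S) := by
    intro F hF f hf
    set base : Finset (ℕ × ℕ) := hF.toFinset.attach.image
      (fun x => ((x.1 : ℕ), (f ⟨x.1, (Set.Finite.mem_toFinset hF).mp x.2⟩ : ℕ))) with hbase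
    have hb : GoodP S base := by
      intro q hq q' hq'
      obtain ⟨x, -, rfl⟩ := Finset.mem_image.mp hq
      obtain ⟨y, -, rfl⟩ := Finset.mem_image.mp hq'
      exact (hf ⟨x.1, (Set.Finite.mem_toFinset hF).mp x.2⟩
        ⟨y.1, (Set.Finite.mem_toFinset hF).mp y.2⟩).symm
    set A : ℕ → ℕ → Prop := fun a b => ∃ n, (a, b) ∈ chain S base n with hA
    have hAgood : ∀ {a b a' b'}, A a b → A a' b' → dUr S a a' = dUr S b b' := by
      intro a b a' b' ⟨n, hn⟩ ⟨n', hn'⟩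
      exact goodP_chain S base hb (max n n') _
        (chain_mono S base (le_max_left n n') hn) _
        (chain_mono S base (le_max_right n n') hn')
    have hfunc : ∀ {a b b'}, A a b → A a b' → b = b' := by
      intro a b b' h1 h2
      have := hAgood h1 h2
      rw [dUr_self] at this
      by_contra hne
      exact absurd this.symm (ne_of_gt (dUr_pos hne))
    have hinj : ∀ {a a' b}, A a b → A a' b → a = a' := by
      intro a a' b h1 h2
      have := hAgood h1 h2
      rw [dUr_self] at this
      by_contra hne
      exact absurd this (ne_of_gt (dUr_pos hne))
    set g : Usp S → Usp S := fun a => (mem_left_chain S base hb a).choose with hg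
    have hgA : ∀ a : ℕ, A a (g a) := fun a => ⟨a + 1, (mem_left_chain S base hb a).choose_spec⟩
    have hgsurj : Function.Surjective g := by
      intro b
      obtain ⟨p, hp⟩ := mem_right_chain S base hb b
      exact ⟨p, hfunc (hgA p) ⟨(show ℕ from b) + 1, hp⟩⟩
    have hginj : Function.Injective g := by
      intro a a' h
      exact hinj (hgA a) (h ▸ hgA a')
    have hgiso : ∀ a a' : Usp S, dist (g a) (g a') = dist a a' := by
      intro a a'
      rw [hdist, hdist]
      exact (hAgood (hgA a) (hgA a')).symm
    refine ⟨⟨Equiv.ofBijective g ⟨hginj, hgsurj⟩, Isometry.of_dist_eq hgiso⟩, ?_⟩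
    intro x
    have hmem := Finset.mem_image_of_mem (β := ℕ × ℕ)
      (fun x => ((x.1 : ℕ), (f ⟨x.1, (Set.Finite.mem_toFinset hF).mp x.2⟩ : ℕ)))
      (Finset.mem_attach hF.toFinset ⟨(x : Usp S), (Set.Finite.mem_toFinset hF).mpr x.2⟩)
    show g (x : Usp S) = f x
    refine hfunc (hgA (x : Usp S)) ⟨0, ?_⟩
    show (((x : Usp S) : ℕ), ((f x : Usp S) : ℕ)) ∈ base
    rw [hbase]
    exact hmem
  -- completeness
  have hcomp : CompleteSpace (Usp S) := by
    apply Metric.complete_of_cauchySeq_tendsto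
    intro u hu
    obtain ⟨M, hM⟩ := (Metric.cauchySeq_iff.mp hu) S.eps S.heps
    refine ⟨u M, tendsto_atTop_of_eventually_const (i₀ := M) ?_⟩
    intro i hi
    have h1 := hM i hi M (le_refl M)
    have h2 : dist (u i) (u M) ∈ S.R := hds ▸ ⟨u i, u M, rfl⟩
    by_contra hne
    have : dist (u i) (u M) ≠ 0 := fun h => hne (eq_of_dist_eq_zero h)
    exact absurd h1 (not_lt.mpr (S.hepssep _ h2 this))
  -- universality
  refine ⟨⟨hhom, TopologicalSpace.Countable.to_separableSpace, hcomp, ?_⟩, hds⟩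
  intro N _ _ hsubN
  by_cases hemp : IsEmpty N
  · exact ⟨fun a => (hemp.false a).elim, fun a => (hemp.false a).elim⟩
  haveI : Nonempty N := not_isEmpty_iff.mp hemp
  have hND : ∀ a b : N, dist a b ∈ S.R := fun a b => hds ▸ hsubN ⟨a, b, rfl⟩
  -- N is countable
  obtain ⟨D, hDc, hDd⟩ := TopologicalSpace.exists_countable_dense N
  have hDall : ∀ x : N, x ∈ D := by
    intro x
    obtain ⟨y, hyD, hxy⟩ := Metric.mem_closure_iff.mp (hDd x) S.eps S.heps
    have : dist x y = 0 := by
      by_contra hne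
      exact absurd hxy (not_lt.mpr (S.hepssep _ (hND x y) hne))
    rwa [eq_of_dist_eq_zero this]
  haveI : Countable N := by
    rw [← Set.countable_univ_iff]
    exact hDc.mono (fun x _ => hDall x)
  obtain ⟨e, he⟩ := exists_surjective_nat N
  have iso := embSeq_iso S e hND
  refine ⟨fun a => (embSeq S e (he a).choose : Usp S), ?_⟩
  intro a b
  have ha := (he a).choose_spec
  have hb := (he b).choose_spec
  exact (iso _ _).trans (by rw [ha, hb])

section Forward

/-- A three-point type for building triangles. -/
inductive Three : Type
  | p0 | p1 | p2
deriving DecidableEq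

instance : Fintype Three := ⟨{.p0, .p1, .p2}, fun x => by cases x <;> simp⟩

def tdist (x a b : ℝ) : Three → Three → ℝ
  | .p0, .p0 => 0
  | .p1, .p1 => 0
  | .p2, .p2 => 0
  | .p0, .p1 => x
  | .p1, .p0 => x
  | .p0, .p2 => a
  | .p2, .p0 => a
  | .p1, .p2 => b
  | .p2, .p1 => b

noncomputable def threeMetric (x a b : ℝ) (hx : 0 < x) (ha : 0 < a) (hb : 0 < b)
    (ht : Tri x a b) : MetricSpace Three :=
  { dist := tdist x a b
    dist_self := by intro p; cases p <;> rfl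
    dist_comm := by intro p q; cases p <;> cases q <;> rfl
    dist_triangle := by
      intro p q r
      obtain ⟨h1, h2, h3⟩ := ht
      cases p <;> cases q <;> cases r <;> simp [tdist] <;> linarith
    eq_of_dist_eq_zero := by
      intro p q h
      cases p <;> cases q <;> first
        | rfl
        | (exfalso; simp [tdist] at h; linarith) }

end Forward

lemma distSet_nonneg {X : Type} [MetricSpace X] {r : ℝ} (h : r ∈ distSet X) : 0 ≤ r := by
  obtain ⟨u, v, rfl⟩ := h
  exact dist_nonneg

lemma existsTriple {X : Type} [MetricSpace X] (hU : IsUrysohn X) {x a b : ℝ}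
    (hx : x ∈ distSet X) (ha : a ∈ distSet X) (hb : b ∈ distSet X)
    (ht : MetricTriple x a b) :
    ∃ P0 P1 Q : X, dist P0 P1 = x ∧ dist Q P0 = a ∧ dist Q P1 = b := by
  obtain ⟨habs, hsum⟩ := ht
  rw [abs_sub_le_iff] at habs
  by_cases hx0 : x = 0
  · -- then a = b
    have hab : a = b := by
      subst hx0; linarith [habs.1, habs.2, hsum]
    obtain ⟨u, v, huv⟩ := ha
    exact ⟨u, u, v, by rw [hx0, dist_self], by rw [dist_comm]; exact huv,
      by rw [dist_comm, huv, hab]⟩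
  by_cases ha0 : a = 0
  · have hbx : b = x := by subst ha0; linarith [habs.1, habs.2, hsum]
    obtain ⟨u, v, huv⟩ := hx
    exact ⟨u, v, u, huv, by rw [dist_self, ha0], by rw [huv, hbx]⟩
  by_cases hb0 : b = 0
  · have hax : a = x := by subst hb0; linarith [habs.1, habs.2, hsum]
    obtain ⟨u, v, huv⟩ := hx
    exact ⟨u, v, v, huv, by rw [dist_comm, huv, hax], by rw [dist_self, hb0]⟩
  · -- all positive: embed a genuine triangle
    have hxp : 0 < x := lt_of_le_of_ne (distSet_nonneg hx) (Ne.symm hx0)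
    have hap : 0 < a := lt_of_le_of_ne (distSet_nonneg ha) (Ne.symm ha0)
    have hbp : 0 < b := lt_of_le_of_ne (distSet_nonneg hb) (Ne.symm hb0)
    have h0X : (0:ℝ) ∈ distSet X := by
      obtain ⟨u, v, -⟩ := hx
      exact ⟨u, u, dist_self u⟩
    letI m3 : MetricSpace Three := threeMetric x a b hxp hap hbp
      ⟨by linarith [habs.1, habs.2, hsum], by linarith [habs.1, habs.2, hsum],
       by linarith [habs.1, habs.2, hsum]⟩
    have hsub3 : distSet Three ⊆ distSet X := by
      rintro r ⟨p, q, rfl⟩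
      have : dist p q = tdist x a b p q := rfl
      rw [this]
      cases p <;> cases q <;> simp [tdist] <;> assumption
    obtain ⟨f, hf⟩ := hU.2.2.2 Three hsub3
    exact ⟨f .p0, f .p1, f .p2, by rw [hf]; rfl, by rw [hf]; rfl, by rw [hf]; rfl⟩

lemma forwardFour {X : Type} [MetricSpace X] (hU : IsUrysohn X) : FourValues (distSet X) := by
  intro a b c d ha hb hc hd ⟨x, hx, hMT1, hMT2, hba, hca, hda⟩
  obtain ⟨P0, P1, Q, hx01, haQ, hbQ⟩ := existsTriple hU hx ha hb hMT1
  -- configuration for (x, d, c)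
  have hMT2' : MetricTriple x d c :=
    metricTriple_iff_tri.mpr (metricTriple_iff_tri.mp hMT2).perm2
  obtain ⟨P0', P1', S', hx01', hdS', hcS'⟩ := existsTriple hU hx hd hc hMT2'
  -- homogeneity: move (P0', P1') onto (P0, P1)
  set F : Set X := {P0', P1'} with hFdef
  have hFfin : F.Finite := (Set.finite_singleton P1').insert P0'
  classical
  set φ : F → X := fun z => if (z : X) = P0' then P0 else P1 with hφ
  have hkey : dist P0 P1 = dist P0' P1' := by rw [hx01, hx01']
  have hcases : ∀ z : F, ((z : X) = P0' ∧ φ z = P0) ∨ ((z : X) = P1' ∧ φ z = P1) := by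
    intro z
    by_cases h : (z : X) = P0'
    · exact Or.inl ⟨h, by rw [hφ]; simp [h]⟩
    · have : (z : X) = P1' := by
        rcases (Set.mem_insert_iff.mp z.2) with h' | h'
        · exact absurd h' h
        · exact Set.mem_singleton_iff.mp h'
      exact Or.inr ⟨this, by rw [hφ]; simp [h]⟩
  have hiso : ∀ z w : F, dist (φ z) (φ w) = dist (z : X) (w : X) := by
    intro z w
    rcases hcases z with ⟨hz1, hz2⟩ | ⟨hz1, hz2⟩ <;>
      rcases hcases w with ⟨hw1, hw2⟩ | ⟨hw1, hw2⟩ <;> rw [hz1, hz2, hw1, hw2]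
    · rw [dist_self, dist_self]
    · exact hkey
    · rw [dist_comm, dist_comm P1' P0']; exact hkey
    · rw [dist_self, dist_self]
  obtain ⟨g, hg⟩ := hU.1 F hFfin φ hiso
  have hmem0 : P0' ∈ F := Set.mem_insert _ _
  have hmem1 : P1' ∈ F := Set.mem_insert_of_mem _ rfl
  have hg0 : g P0' = P0 := by
    have := hg ⟨P0', hmem0⟩
    rwa [show φ ⟨P0', hmem0⟩ = P0 by rw [hφ]; simp] at this
  have hg1 : g P1' = P1 := by
    have := hg ⟨P1', hmem1⟩
    by_cases h : P1' = P0'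
    · have hP01 : P0 = P1 := by
        apply eq_of_dist_eq_zero
        rw [hkey, h, dist_self]
      rwa [show φ ⟨P1', hmem1⟩ = P1 by rw [hφ]; simp [h, hP01]] at this
    · rwa [show φ ⟨P1', hmem1⟩ = P1 by rw [hφ]; simp [h]] at this
  set S : X := g S' with hS
  have hdS : dist S P0 = d := by rw [hS, ← hg0, g.dist_eq, hdS']
  have hcS : dist S P1 = c := by rw [hS, ← hg1, g.dist_eq, hcS']
  refine ⟨dist Q S, ⟨Q, S, rfl⟩, ?_, ?_, hda, hca, hba⟩
  · constructor
    · rw [abs_sub_le_iff]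
      have e1 : dist P0 S = d := by rw [dist_comm]; exact hdS
      exact ⟨by linarith [dist_triangle Q P0 S, haQ, e1],
        by linarith [dist_triangle Q S P0, haQ, hdS]⟩
    · have e3 : dist S Q = dist Q S := dist_comm _ _
      linarith [dist_triangle S Q P0, hdS, haQ, e3]
  · constructor
    · rw [abs_sub_le_iff]
      have e2 : dist P1 S = c := by rw [dist_comm]; exact hcS
      have e3 : dist S Q = dist Q S := dist_comm _ _
      exact ⟨by linarith [dist_triangle Q P1 S, hbQ, e2],
        by linarith [dist_triangle S Q P1, hcS, hbQ, e3]⟩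
    · linarith [dist_triangle Q S P1, hbQ, hcS]

lemma forwardCountable {X : Type} [MetricSpace X]
    (hsep : TopologicalSpace.SeparableSpace X) {ε : ℝ} (hε : 0 < ε)
    (hsepd : ∀ r ∈ distSet X, r ≠ 0 → ε ≤ r) : (distSet X).Countable := by
  obtain ⟨D, hDc, hDd⟩ := TopologicalSpace.exists_countable_dense X
  have hDall : ∀ x : X, x ∈ D := by
    intro x
    obtain ⟨y, hyD, hxy⟩ := Metric.mem_closure_iff.mp (hDd x) ε hε
    have : dist x y = 0 := by
      by_contra hne
      exact absurd hxy (not_lt.mpr (hsepd _ ⟨x, y, rfl⟩ hne))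
    rwa [eq_of_dist_eq_zero this]
  haveI : Countable X := by
    rw [← Set.countable_univ_iff]
    exact hDc.mono (fun x _ => hDall x)
  have : distSet X = Set.range (fun p : X × X => dist p.1 p.2) := by
    ext r
    constructor
    · rintro ⟨u, v, rfl⟩; exact ⟨(u, v), rfl⟩
    · rintro ⟨⟨u, v⟩, rfl⟩; exact ⟨u, v, rfl⟩
  rw [this]
  exact Set.countable_range _

lemma punitCase : IsUrysohn PUnit.{1} ∧ distSet PUnit.{1} = {(0:ℝ)} := by
  have hds : distSet PUnit.{1} = {(0:ℝ)} := by
    ext r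
    constructor
    · rintro ⟨u, v, rfl⟩
      have : u = v := Subsingleton.elim u v
      rw [this, dist_self]
      rfl
    · intro hr
      exact ⟨PUnit.unit, PUnit.unit, by rw [dist_self, Set.mem_singleton_iff.mp hr]⟩
  refine ⟨⟨?_, ?_, ?_, ?_⟩, hds⟩
  · intro F hF f hf
    exact ⟨IsometryEquiv.refl PUnit.{1}, fun x => Subsingleton.elim _ _⟩
  · infer_instance
  · exact Metric.complete_of_cauchySeq_tendsto (fun u hu =>
      ⟨PUnit.unit, by
        have : u = fun _ => PUnit.unit := funext (fun n => Subsingleton.elim _ _)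
        rw [this]
        exact tendsto_const_nhds⟩)
  · intro N _ _ hsub
    refine ⟨fun _ => PUnit.unit, fun a b => ?_⟩
    have h1 : dist a b ∈ distSet N := ⟨a, b, rfl⟩
    have h2 := hds ▸ hsub h1
    rw [dist_self, Set.mem_singleton_iff.mp h2]

/-- For `0 ∈ R ⊆ [0,∞)` such that `0` is not a limit point of `R`, there
exists an Urysohn metric space with distance set `R` iff `R` is countable and satisfies
the 4-values condition. -/
theorem statement1 (R : Set ℝ) (hR : R ⊆ Set.Ici 0) (h0 : (0 : ℝ) ∈ R)
    (hlim : ¬ ZeroLimit R) :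
    (∃ (X : Type) (inst : MetricSpace X), @IsUrysohn X inst ∧ @distSet X inst = R) ↔
      R.Countable ∧ FourValues R := by
  classical
  obtain ⟨ε, hε, hεsep⟩ : ∃ ε > 0, ∀ r ∈ R, r ≠ 0 → ε ≤ r := by
    unfold ZeroLimit at hlim
    push_neg at hlim
    obtain ⟨ε, hε, h⟩ := hlim
    refine ⟨ε, hε, fun r hr hr0 => ?_⟩
    have hrpos : 0 < r := lt_of_le_of_ne (hR hr) (Ne.symm hr0)
    by_contra hlt
    exact absurd (h r hr hrpos) (not_le.mpr (not_le.mp hlt))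
  constructor
  · rintro ⟨X, inst, hU, rfl⟩
    exact ⟨forwardCountable hU.2.1 hε hεsep, forwardFour hU⟩
  · rintro ⟨hcnt, h4⟩
    by_cases hpos : ∃ r ∈ R, 0 < r
    · obtain ⟨r0, hr0R, hr0pos⟩ := hpos
      obtain ⟨eR, heR⟩ := hcnt.exists_eq_range ⟨0, h0⟩
      exact reverseMain
        { R := R, hsub := hR, h0 := h0, h4 := h4
          eR := eR
          heR := fun n => heR ▸ Set.mem_range_self n
          heRsurj := fun r hr => by
            rw [heR] at hr
            exact hr
          r0 := r0, hr0 := hr0R, hr0pos := hr0pos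
          eps := ε, heps := hε, hepssep := hεsep }
    · have hR0 : R = {(0:ℝ)} := by
        apply Set.Subset.antisymm
        · intro r hr
          rcases eq_or_lt_of_le (Set.mem_Ici.mp (hR hr)) with h | h
          · exact Set.mem_singleton_iff.mpr h.symm
          · exact absurd ⟨r, hr, h⟩ hpos
        · intro r hr
          rw [Set.mem_singleton_iff.mp hr]
          exact h0
      obtain ⟨hUry, hds⟩ := punitCase
      exact ⟨PUnit.{1}, inferInstance, hUry, by rw [hds, hR0]⟩
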